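/- Let q be an odd prime power, 𝔽_q a finite field of order q, m ≥ 2, and let H be the point-by-line incidence matrix over 𝔽₂ of AG₁(m,q) (rows indexed by the vectors of 𝔽_q^m, columns indexed by the cosets of 1-dimensional subspaces of 𝔽_q^m, entry 1 exactly when the point lies on the line). Then the rank of H over 𝔽₂ equals q^m, i.e., H has full row rank. -/

import Mathlib

open scoped Classical

/-- The lines of the affine geometry design `AG₁(m, q)`: cosets of the one-dimensional
linear subspaces of `𝔽_q^m`. -/
def AffineLine (F : Type) [Field F] (m : ℕ) : Type :=
  {ℓ : Set (Fin m → F) // ∃ (W : Submodule F (Fin m → F)) (a : Fin m → F),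
    Module.finrank F W = 1 ∧ ℓ = (a + ·) '' (W : Set (Fin m → F))}

noncomputable instance (F : Type) [Field F] [Fintype F] (m : ℕ) :
    Fintype (AffineLine F m) := by
  unfold AffineLine; exact Fintype.ofFinite _

/-- The affine line through `a` with direction `d ≠ 0`. -/
noncomputable def mkLine {F : Type} [Field F] {m : ℕ} (a d : Fin m → F) (hd : d ≠ 0) :
    AffineLine F m :=
  ⟨(a + ·) '' ((Submodule.span F {d} : Submodule F (Fin m → F)) : Set (Fin m → F)),
    Submodule.span F {d}, a, finrank_span_singleton hd, rfl⟩

theorem mem_mkLine {F : Type} [Field F] {m : ℕ} (a d : Fin m → F) (hd : d ≠ 0)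
    (p : Fin m → F) : p ∈ (mkLine a d hd).1 ↔ ∃ t : F, p = a + t • d := by
  simp only [mkLine, Set.mem_image, SetLike.mem_coe, Submodule.mem_span_singleton]
  constructor
  · rintro ⟨x, ⟨t, rfl⟩, rfl⟩; exact ⟨t, rfl⟩
  · rintro ⟨t, rfl⟩; exact ⟨t • d, ⟨t, rfl⟩, rfl⟩

/-- Yakir: for `q` an odd prime power and `m ≥ 2`, the point-by-line
incidence matrix `H` over `𝔽₂` of `AG₁(m, q)` has full 𝔽₂-row-rank `q^m`. -/
theorem stmt_18 (q m : ℕ) (hq : Odd q) (hm : 2 ≤ m)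
    (F : Type) [Field F] [Fintype F] (hF : Fintype.card F = q)
    (H : Matrix (Fin m → F) (AffineLine F m) (ZMod 2))
    (hH : ∀ p ℓ, H p ℓ = if p ∈ ℓ.1 then 1 else 0) :
    H.rank = q ^ m := by
  have hq2 : (q : ZMod 2) = 1 := by
    obtain ⟨k, rfl⟩ := hq
    push_cast
    rw [show ((2 : ZMod 2)) = 0 by decide]
    ring
  set i0 : Fin m := ⟨0, by omega⟩ with hi0
  set i1 : Fin m := ⟨1, by omega⟩ with hi1
  have hi01 : i0 ≠ i1 := by simp [hi0, hi1, Fin.ext_iff]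
  set e0 : Fin m → F := Pi.single i0 1 with he0def
  set e1 : Fin m → F := Pi.single i1 1 with he1def
  have he0i0 : e0 i0 = 1 := Pi.single_eq_same i0 1
  have he0i1 : e0 i1 = 0 := Pi.single_eq_of_ne hi01.symm 1
  have he1i0 : e1 i0 = 0 := Pi.single_eq_of_ne hi01 1
  have he1i1 : e1 i1 = 1 := Pi.single_eq_same i1 1
  have he1 : e1 ≠ 0 := by
    intro h
    have := congrFun h i1
    rw [he1i1] at this
    simpa using this
  have he0t : ∀ t : F, e0 + t • e1 ≠ 0 := by
    intro t h
    have := congrFun h i0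
    simp only [Pi.add_apply, Pi.smul_apply, smul_eq_mul, he0i0, he1i0, mul_zero, add_zero,
      Pi.zero_apply] at this
    exact one_ne_zero this
  -- each standard basis vector is in the column space of H
  have hrange : ∀ p : Fin m → F,
      (Pi.single p 1 : (Fin m → F) → ZMod 2) ∈ LinearMap.range H.mulVecLin := by
    intro p
    refine ⟨Pi.single (mkLine p e1 he1) 1
        + ∑ t : F, Pi.single (mkLine p (e0 + t • e1) (he0t t)) 1
        + ∑ s : F, Pi.single (mkLine (p + s • e0) e1 he1) 1, ?_⟩
    funext p'
    rw [map_add, map_add, map_sum, map_sum]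
    simp only [Matrix.mulVecLin_apply, Matrix.mulVec_single_one, Matrix.col_apply, mul_one, Pi.add_apply,
      Finset.sum_apply]
    simp only [hH, mem_mkLine]
    set a : F := p' i0 - p i0 with ha_def
    set b : F := p' i1 - p i1 with hb_def
    have key : ∀ α β : F, p' = p + α • e0 + β • e1 → α = a ∧ β = b := by
      intro α β h
      have h0 := congrFun h i0
      have h1 := congrFun h i1
      simp only [Pi.add_apply, Pi.smul_apply, smul_eq_mul, he0i0, he0i1, he1i0, he1i1,
        mul_one, mul_zero, add_zero] at h0 h1
      constructor
      · rw [ha_def, h0]; ring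
      · rw [hb_def, h1]; ring
    have iff1 : (∃ t : F, p' = p + t • e1) ↔
        (p' = p + a • e0 + b • e1 ∧ a = 0) := by
      constructor
      · rintro ⟨t, h⟩
        have h' : p' = p + (0 : F) • e0 + t • e1 := by
          rw [zero_smul, add_zero]; exact h
        obtain ⟨hα, hβ⟩ := key 0 t h'
        rw [hα, hβ] at h'
        exact ⟨h', hα.symm⟩
      · rintro ⟨hP, ha0⟩
        refine ⟨b, ?_⟩
        rw [hP, ha0, zero_smul, add_zero]
    have iff2 : ∀ t : F, (∃ u : F, p' = p + u • (e0 + t • e1)) ↔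
        (p' = p + a • e0 + b • e1 ∧ b = a * t) := by
      intro t
      constructor
      · rintro ⟨u, h⟩
        have h' : p' = p + u • e0 + (u * t) • e1 := by
          rw [h, smul_add, smul_smul, ← add_assoc]
        obtain ⟨hα, hβ⟩ := key u (u * t) h'
        rw [hα] at h' hβ
        rw [hβ] at h'
        exact ⟨h', hβ.symm⟩
      · rintro ⟨hP, hb⟩
        refine ⟨a, ?_⟩
        rw [smul_add, smul_smul, ← add_assoc, ← hb]
        exact hP
    have iff3 : ∀ s : F, (∃ t : F, p' = p + s • e0 + t • e1) ↔
        (p' = p + a • e0 + b • e1 ∧ a = s) := by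
      intro s
      constructor
      · rintro ⟨t, h⟩
        obtain ⟨hα, hβ⟩ := key s t h
        rw [hα, hβ] at h
        exact ⟨h, hα.symm⟩
      · rintro ⟨hP, has⟩
        refine ⟨b, ?_⟩
        rw [← has]
        exact hP
    have hppeq : (p' = p) ↔ (p' = p + a • e0 + b • e1 ∧ a = 0 ∧ b = 0) := by
      constructor
      · intro h
        have h' : p' = p + (0 : F) • e0 + (0 : F) • e1 := by
          simp only [zero_smul, add_zero]; exact h
        obtain ⟨hα, hβ⟩ := key 0 0 h'
        exact ⟨by rw [← hα, ← hβ]; exact h', hα.symm, hβ.symm⟩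
      · rintro ⟨hP, ha0, hb0⟩
        rw [hP, ha0, hb0]
        simp only [zero_smul, add_zero]
    have hsingle : (Pi.single p 1 : (Fin m → F) → ZMod 2) p' = if p' = p then 1 else 0 :=
      Pi.single_apply p 1 p'
    rw [hsingle]
    simp only [iff1, iff2, iff3, hppeq]
    by_cases hP : p' = p + a • e0 + b • e1
    · by_cases ha : a = 0
      · by_cases hb : b = 0
        · rw [if_pos ⟨hP, ha⟩, if_pos ⟨hP, ha, hb⟩]
          have h2 : ∑ t : F, (if (p' = p + a • e0 + b • e1 ∧ b = a * t) then (1 : ZMod 2)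
              else 0) = 1 := by
            have : ∀ t : F, (p' = p + a • e0 + b • e1 ∧ b = a * t) := fun t =>
              ⟨hP, by rw [ha, hb, zero_mul]⟩
            simp only [if_pos (this _)]
            rw [Finset.sum_const, Finset.card_univ, hF, nsmul_eq_mul, mul_one, hq2]
          have h3 : ∑ s : F, (if (p' = p + a • e0 + b • e1 ∧ a = s) then (1 : ZMod 2)
              else 0) = 1 := by
            simp only [hP, true_and]
            rw [Finset.sum_ite_eq Finset.univ a (fun _ => (1 : ZMod 2))]
            simp
          rw [h2, h3]
          decide
        · rw [if_pos ⟨hP, ha⟩, if_neg (fun h => hb h.2.2)]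
          have h2 : ∑ t : F, (if (p' = p + a • e0 + b • e1 ∧ b = a * t) then (1 : ZMod 2)
              else 0) = 0 := by
            refine Finset.sum_eq_zero fun t _ => ?_
            rw [if_neg]
            rintro ⟨-, hbt⟩
            rw [ha, zero_mul] at hbt
            exact hb hbt
          have h3 : ∑ s : F, (if (p' = p + a • e0 + b • e1 ∧ a = s) then (1 : ZMod 2)
              else 0) = 1 := by
            simp only [hP, true_and]
            rw [Finset.sum_ite_eq Finset.univ a (fun _ => (1 : ZMod 2))]
            simp
          rw [h2, h3]
          decide
      · rw [if_neg (fun h => ha h.2), if_neg (fun h => ha h.2.1)]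
        have h2 : ∑ t : F, (if (p' = p + a • e0 + b • e1 ∧ b = a * t) then (1 : ZMod 2)
            else 0) = 1 := by
          have : ∀ t : F, (b = a * t) ↔ (a⁻¹ * b = t) := by
            intro t
            constructor
            · intro h; rw [h]; field_simp
            · intro h; rw [← h]; field_simp
          simp only [hP, true_and, this]
          rw [Finset.sum_ite_eq Finset.univ (a⁻¹ * b) (fun _ => (1 : ZMod 2))]
          simp
        have h3 : ∑ s : F, (if (p' = p + a • e0 + b • e1 ∧ a = s) then (1 : ZMod 2)
            else 0) = 1 := by
          simp only [hP, true_and]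
          rw [Finset.sum_ite_eq Finset.univ a (fun _ => (1 : ZMod 2))]
          simp
        rw [h2, h3]
        decide
    · rw [if_neg (fun h => hP h.1), if_neg (fun h => hP h.1)]
      have h2 : ∑ t : F, (if (p' = p + a • e0 + b • e1 ∧ b = a * t) then (1 : ZMod 2)
          else 0) = 0 :=
        Finset.sum_eq_zero fun t _ => if_neg (fun h => hP h.1)
      have h3 : ∑ s : F, (if (p' = p + a • e0 + b • e1 ∧ a = s) then (1 : ZMod 2)
          else 0) = 0 :=
        Finset.sum_eq_zero fun s _ => if_neg (fun h => hP h.1)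
      rw [h2, h3]
      decide
  have htop : LinearMap.range H.mulVecLin = ⊤ := by
    rw [eq_top_iff]
    intro v _
    have hv : v = ∑ p : Fin m → F, v p • (Pi.single p 1 : (Fin m → F) → ZMod 2) := by
      funext j
      rw [Finset.sum_apply]
      simp only [Pi.smul_apply, Pi.single_apply, smul_eq_mul, mul_ite, mul_one, mul_zero]
      rw [Finset.sum_ite_eq Finset.univ j v]
      simp
    rw [hv]
    exact Submodule.sum_mem _ fun p _ => Submodule.smul_mem _ _ (hrange p)
  rw [Matrix.rank, htop, finrank_top, Module.finrank_pi]
  rw [Fintype.card_fun, Fintype.card_fin, hF]
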